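/- Fix an integer p ≥ 2. Let N ≥ 2 be an integer, q := exp(2π√−1/N), and let n₁, …, n_{2p−1} be integers with 0 ≤ n₁ ≤ n₂ ≤ … ≤ n_{2p−1} ≤ N − 1. Then ‖(q)_{n_{2p−1}}‖ · ∏_{i=1}^{2p−2} ‖[n_{i+1}; n_i]_q‖ ≤ N · 2^{(N−1)(2p−1)}. -/

import Mathlib

/-- The q-Pochhammer symbol `(q)_n = ∏_{k=1}^n (1 - q^k)`. -/
noncomputable def qPoch (q : ℂ) (n : ℕ) : ℂ := ∏ k ∈ Finset.Icc 1 n, (1 - q ^ k)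

/-- The Gaussian (q-binomial) coefficient `[m; k]_q = (q)_m / ((q)_{m-k} (q)_k)`. -/
noncomputable def qBinom (q : ℂ) (m k : ℕ) : ℂ := qPoch q m / (qPoch q (m - k) * qPoch q k)

lemma qaux_tail (q : ℂ) (hq : ‖q‖ = 1) (a b : ℕ) :
    ‖∏ j ∈ Finset.Ioc a b, (1 - q ^ j)‖ ≤ 2 ^ (b - a) := by
  rw [norm_prod]
  calc ∏ j ∈ Finset.Ioc a b, ‖1 - q ^ j‖ ≤ ∏ j ∈ Finset.Ioc a b, 2 := by
        apply Finset.prod_le_prod (fun _ _ => norm_nonneg _)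
        intro j _
        calc ‖1 - q ^ j‖ ≤ ‖(1:ℂ)‖ + ‖q ^ j‖ := norm_sub_le _ _
          _ = 2 := by rw [norm_pow, hq]; norm_num
    _ = 2 ^ (b - a) := by rw [Finset.prod_const, Nat.card_Ioc]

lemma qPoch_Ioc (q : ℂ) (m : ℕ) : qPoch q m = ∏ j ∈ Finset.Ioc 0 m, (1 - q ^ j) := by
  rw [qPoch, ← Finset.Icc_add_one_left_eq_Ioc, Nat.zero_add]

lemma qPoch_norm_le (q : ℂ) (hq : ‖q‖ = 1) (m : ℕ) : ‖qPoch q m‖ ≤ 2 ^ m := by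
  rw [qPoch_Ioc]
  simpa using qaux_tail q hq 0 m

lemma qPoch_split (q : ℂ) (a b : ℕ) (h : a ≤ b) :
    qPoch q b = qPoch q a * ∏ j ∈ Finset.Ioc a b, (1 - q ^ j) := by
  rw [qPoch_Ioc, qPoch_Ioc, Finset.prod_Ioc_consecutive _ (Nat.zero_le a) h]

section main
variable {N : ℕ} (hN : 2 ≤ N) {q : ℂ} (hq : IsPrimitiveRoot q N)

include hN hq

lemma qPoch_full_norm : ‖qPoch q (N - 1)‖ = N := by
  have h1 : (N - 1) + 1 = N := by omega
  have hq' := hq; rw [← h1] at hq'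
  have h2 := IsPrimitiveRoot.prod_one_sub_pow_eq_order hq'
  have h3 : qPoch q (N - 1) = (N : ℂ) := by
    rw [qPoch]
    have : Finset.Icc 1 (N - 1) = Finset.Ico 1 (N - 1 + 1) := by
      rw [Finset.Ico_add_one_right_eq_Icc]
    rw [this, Finset.prod_Ico_eq_prod_range]
    simp only [Nat.add_sub_cancel]
    rw [show ∏ k ∈ Finset.range (N-1), (1 - q ^ (1 + k)) = ∏ k ∈ Finset.range (N-1), (1 - q ^ (k + 1)) from by
      apply Finset.prod_congr rfl; intro k _; rw [Nat.add_comm], h2]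
    rw [Nat.cast_sub (by omega : 1 ≤ N)]
    ring
  rw [h3, Complex.norm_natCast]

lemma qPoch_norm_ge (m : ℕ) (hm : m ≤ N - 1) :
    (N : ℝ) ≤ ‖qPoch q m‖ * 2 ^ (N - 1 - m) := by
  have hqn : ‖q‖ = 1 := Complex.norm_eq_one_of_pow_eq_one hq.pow_eq_one (by omega)
  have hs := qPoch_split q m (N - 1) hm
  have : (N : ℝ) = ‖qPoch q m‖ * ‖∏ j ∈ Finset.Ioc m (N-1), (1 - q ^ j)‖ := by
    rw [← norm_mul, ← hs, qPoch_full_norm hN hq]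
  rw [this]
  exact mul_le_mul_of_nonneg_left (qaux_tail q hqn m (N-1)) (norm_nonneg _)

lemma qBinom_norm_le (m k : ℕ) (hkm : k ≤ m) (hm : m ≤ N - 1) :
    ‖qBinom q m k‖ ≤ 2 ^ (N - 1) := by
  have hqn : ‖q‖ = 1 := Complex.norm_eq_one_of_pow_eq_one hq.pow_eq_one (by omega)
  have hkpos : qPoch q k ≠ 0 := by
    rw [qPoch]
    apply Finset.prod_ne_zero_iff.mpr
    intro j hj
    simp only [Finset.mem_Icc] at hj
    have : q ^ j ≠ 1 := hq.pow_ne_one_of_pos_of_lt (by omega) (by omega)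
    intro h0
    apply this
    have := sub_eq_zero.mp h0
    exact this.symm
  have hs := qPoch_split q k m hkm
  have hbin : qBinom q m k = (∏ j ∈ Finset.Ioc k m, (1 - q ^ j)) / qPoch q (m - k) := by
    rw [qBinom, hs, mul_comm (qPoch q (m - k)) (qPoch q k)]
    exact mul_div_mul_left _ _ hkpos
  rw [hbin]
  have hPge := qPoch_norm_ge hN hq (m - k) (by omega)
  have hP2 : (0:ℝ) < 2 ^ (N - 1 - (m - k)) := by positivity
  have hPpos : (0:ℝ) < ‖qPoch q (m - k)‖ := by
    nlinarith [(show (0:ℝ) < N by exact_mod_cast (show 0 < N by omega)), norm_nonneg (qPoch q (m-k))]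
  rw [norm_div, div_le_iff₀ hPpos]
  have hT : ‖∏ j ∈ Finset.Ioc k m, (1 - q ^ j)‖ ≤ 2 ^ (m - k) := qaux_tail q hqn k m
  have hexp : (2:ℝ) ^ (m - k) * 2 ^ (N - 1 - (m - k)) = 2 ^ (N - 1) := by
    rw [← pow_add]; congr 1; omega
  have hN1 : (1:ℝ) ≤ N := by exact_mod_cast Nat.one_le_of_lt hN
  calc ‖∏ j ∈ Finset.Ioc k m, (1 - q ^ j)‖ ≤ 2 ^ (m - k) := hT
    _ ≤ 2 ^ (N - 1) * ‖qPoch q (m - k)‖ := by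
        rw [← hexp]
        nlinarith [hPge, hN1, pow_pos (show (0:ℝ) < 2 by norm_num) (m - k), hP2.le]

end main

theorem qfactor_norm_le (p : ℕ) (hp : 2 ≤ p) (N : ℕ) (hN : 2 ≤ N) (n : ℕ → ℕ)
    (hmono : ∀ i : ℕ, 1 ≤ i → i ≤ 2 * p - 2 → n i ≤ n (i + 1))
    (hbd : n (2 * p - 1) ≤ N - 1) :
    ‖qPoch (Complex.exp (2 * Real.pi * Complex.I / (N : ℂ))) (n (2 * p - 1))‖
        * ∏ i ∈ Finset.Icc 1 (2 * p - 2),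
            ‖qBinom (Complex.exp (2 * Real.pi * Complex.I / (N : ℂ))) (n (i + 1)) (n i)‖
      ≤ (N : ℝ) * 2 ^ ((N - 1) * (2 * p - 1)) := by
  set q : ℂ := Complex.exp (2 * Real.pi * Complex.I / (N : ℂ)) with hqdef
  have hq : IsPrimitiveRoot q N := Complex.isPrimitiveRoot_exp N (by omega)
  have hqn : ‖q‖ = 1 := Complex.norm_eq_one_of_pow_eq_one hq.pow_eq_one (by omega)
  -- monotone chain
  have chain : ∀ d j, 1 ≤ j → j + d = 2 * p - 1 → n j ≤ n (2 * p - 1) := by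
    intro d
    induction d with
    | zero =>
      intro j _ hj
      have : j = 2 * p - 1 := by omega
      rw [this]
    | succ d ih =>
      intro j hj hjd
      have h1 : n j ≤ n (j + 1) := hmono j hj (by omega)
      have h2 : n (j + 1) ≤ n (2 * p - 1) := ih (j + 1) (by omega) (by omega)
      omega
  -- bound each binom factor
  have hbinom : ∀ i ∈ Finset.Icc 1 (2 * p - 2), ‖qBinom q (n (i + 1)) (n i)‖ ≤ 2 ^ (N - 1) := by
    intro i hi
    simp only [Finset.mem_Icc] at hi
    have hki : n i ≤ n (i + 1) := hmono i hi.1 hi.2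
    have hmi : n (i + 1) ≤ N - 1 := le_trans (chain (2*p-1-(i+1)) (i+1) (by omega) (by omega)) hbd
    exact qBinom_norm_le hN hq _ _ hki hmi
  have hprod : ∏ i ∈ Finset.Icc 1 (2 * p - 2), ‖qBinom q (n (i + 1)) (n i)‖
      ≤ ∏ i ∈ Finset.Icc 1 (2 * p - 2), (2:ℝ) ^ (N - 1) :=
    Finset.prod_le_prod (fun _ _ => norm_nonneg _) hbinom
  have hcard : (Finset.Icc 1 (2 * p - 2)).card = 2 * p - 2 := by
    rw [Nat.card_Icc]; omega
  rw [Finset.prod_const, hcard] at hprod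
  have hpoch : ‖qPoch q (n (2 * p - 1))‖ ≤ 2 ^ (N - 1) := by
    calc ‖qPoch q (n (2 * p - 1))‖ ≤ 2 ^ (n (2 * p - 1)) := qPoch_norm_le q hqn _
      _ ≤ 2 ^ (N - 1) := by
          apply pow_le_pow_right₀ (by norm_num) hbd
  have hnonneg : (0:ℝ) ≤ ∏ i ∈ Finset.Icc 1 (2 * p - 2), ‖qBinom q (n (i + 1)) (n i)‖ :=
    Finset.prod_nonneg (fun _ _ => norm_nonneg _)
  have hmain : ‖qPoch q (n (2 * p - 1))‖ * ∏ i ∈ Finset.Icc 1 (2 * p - 2), ‖qBinom q (n (i + 1)) (n i)‖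
      ≤ 2 ^ (N - 1) * ((2:ℝ) ^ (N - 1)) ^ (2 * p - 2) := by
    apply mul_le_mul hpoch hprod hnonneg (by positivity)
  have hexp : (2:ℝ) ^ (N - 1) * ((2:ℝ) ^ (N - 1)) ^ (2 * p - 2) = 2 ^ ((N - 1) * (2 * p - 1)) := by
    rw [← pow_mul, ← pow_add]
    congr 1
    have : 2 * p - 1 = (2 * p - 2) + 1 := by omega
    rw [this]; ring_nf
  rw [hexp] at hmain
  have hN1 : (1:ℝ) ≤ N := by exact_mod_cast (by omega : 1 ≤ N)
  calc _ ≤ (2:ℝ) ^ ((N - 1) * (2 * p - 1)) := hmain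
    _ ≤ (N : ℝ) * 2 ^ ((N - 1) * (2 * p - 1)) := by nlinarith [pow_pos (show (0:ℝ) < 2 by norm_num) ((N-1)*(2*p-1))]
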